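/- Let u : E → ℝ be measurable with P_t|u| < ∞ pointwise for all t ≥ 0, let α ≥ 0 and let c : E → [0,∞] be measurable such that: (1) U_α(|u| + c)(x) < ∞ for every x; (2) limsup_{t→∞} e^{-αt} P_t|u|(x) < ∞ for every x; (3) |P_t u − u| ≤ t·c pointwise for every t ≥ 0; (4) for every x, limsup_n 2^{-n} Σ_{k=1}^{n·2^n} e^{-α(k−1)/2^n} P_{(k−1)/2^n}(|u| + c)(x) < ∞ (in particular this holds when the left-endpoint dyadic Riemann sums of t ↦ e^{-αt} P_t(|u| + c)(x) converge to U_α(|u| + c)(x)). Then sup_n V^α_{τ_n}(u)(x) < ∞ for every x ∈ E, where τ_n := {k/2^n : 0 ≤ k ≤ n·2^n}. -/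

import Mathlib

open MeasureTheory ProbabilityTheory ENNReal Filter
open scoped NNReal

/-- A sub-Markovian semigroup of kernels on a measurable space `E`. -/
structure SubMarkovSemigroup (E : Type*) [MeasurableSpace E] where
  P : ℝ≥0 → Kernel E E
  subMarkov : ∀ t x, P t x Set.univ ≤ 1
  map_zero : ∀ (f : E → ℝ≥0∞), Measurable f → ∀ x, ∫⁻ y, f y ∂(P 0 x) = f x
  map_add : ∀ (t s : ℝ≥0) (f : E → ℝ≥0∞), Measurable f → ∀ x,
      ∫⁻ y, f y ∂(P (t + s) x) = ∫⁻ y, ∫⁻ z, f z ∂(P s y) ∂(P t x)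

/-- Action of the time-`t` kernel on real-valued functions: `P_t f = P_t f⁺ - P_t f⁻`. -/
noncomputable def SubMarkovSemigroup.act {E : Type*} [MeasurableSpace E]
    (S : SubMarkovSemigroup E) (t : ℝ≥0) (f : E → ℝ) (x : E) : ℝ :=
  ∫ y, f y ∂(S.P t x)

/-- A finite partition `0 = t_0 ≤ t_1 ≤ … ≤ t_n < ∞` of `ℝ₊`. -/
structure FinPartition where
  n : ℕ
  t : Fin (n + 1) → ℝ≥0
  mono : Monotone t
  first : t 0 = 0

/-- `V_τ(u) = Σ_{i=1}^n P_{t_{i-1}} |u - P_{t_i - t_{i-1}} u| + P_{t_n}|u|`. -/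
noncomputable def SubMarkovSemigroup.V {E : Type*} [MeasurableSpace E]
    (S : SubMarkovSemigroup E) (u : E → ℝ) (τ : FinPartition) (x : E) : ℝ :=
  (∑ i : Fin τ.n, S.act (τ.t i.castSucc)
      (fun y => |u y - S.act (τ.t i.succ - τ.t i.castSucc) u y|) x)
  + S.act (τ.t (Fin.last τ.n)) (fun y => |u y|) x


/-- The resolvent `U_α f(x) = ∫_0^∞ e^{-αt} P_t f(x) dt`. -/
noncomputable def SubMarkovSemigroup.resolvent {E : Type*} [MeasurableSpace E]
    (S : SubMarkovSemigroup E) (α : ℝ) (f : E → ℝ≥0∞) (x : E) : ℝ≥0∞ :=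
  ∫⁻ t in Set.Ioi (0 : ℝ), ENNReal.ofReal (Real.exp (-α * t)) * ∫⁻ y, f y ∂(S.P t.toNNReal x)

/-- `g` is `α`-supermedian if `e^{-αt} P_t g ≤ g` for all `t`; it is `α`-excessive if
moreover `e^{-αt} P_t g → g` pointwise as `t ↓ 0`. -/
def SubMarkovSemigroup.IsExcessive {E : Type*} [MeasurableSpace E]
    (S : SubMarkovSemigroup E) (α : ℝ) (g : E → ℝ≥0∞) : Prop :=
  Measurable g ∧
  (∀ (t : ℝ≥0) (x : E),
    ENNReal.ofReal (Real.exp (-α * t)) * ∫⁻ y, g y ∂(S.P t x) ≤ g x) ∧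
  (∀ x : E, Filter.Tendsto
    (fun t : ℝ≥0 => ENNReal.ofReal (Real.exp (-α * t)) * ∫⁻ y, g y ∂(S.P t x))
    (nhdsWithin 0 (Set.Ioi 0)) (nhds (g x)))

/-- `V^α_τ(u) = Σ_{i=1}^n P^α_{t_{i-1}} |u - P^α_{t_i - t_{i-1}} u| + P^α_{t_n}|u|`,
where `P^α_t = e^{-αt} P_t`. -/
noncomputable def SubMarkovSemigroup.Valpha {E : Type*} [MeasurableSpace E]
    (S : SubMarkovSemigroup E) (α : ℝ) (u : E → ℝ) (τ : FinPartition) (x : E) : ℝ :=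
  (∑ i : Fin τ.n, Real.exp (-α * τ.t i.castSucc) * S.act (τ.t i.castSucc)
      (fun y => |u y - Real.exp (-α * ((τ.t i.succ : ℝ) - (τ.t i.castSucc : ℝ)))
        * S.act (τ.t i.succ - τ.t i.castSucc) u y|) x)
  + Real.exp (-α * τ.t (Fin.last τ.n)) * S.act (τ.t (Fin.last τ.n)) (fun y => |u y|) x

/-- The dyadic partition `τ_n = {k/2^n : 0 ≤ k ≤ n·2^n}`. -/
noncomputable def dyadicPartition (n : ℕ) : FinPartition where
  n := n * 2 ^ n
  t := fun i => (i : ℕ) / (2 ^ n : ℝ≥0)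
  mono := by
    intro i j hij
    have : ((i : ℕ) : ℝ≥0) ≤ ((j : ℕ) : ℝ≥0) := by exact_mod_cast hij
    exact div_le_div_of_nonneg_right this (by positivity)
  first := by simp

section AuxLemmas

variable {E : Type*} [MeasurableSpace E]

lemma aux_ofReal_integral_abs_le {μ : Measure E} {g : E → ℝ}
    (hg : Measurable g) :
    ENNReal.ofReal (∫ y, |g y| ∂μ) ≤ ∫⁻ y, ENNReal.ofReal |g y| ∂μ := by
  rw [integral_eq_lintegral_of_nonneg_ae (Filter.Eventually.of_forall fun y => abs_nonneg _)
    hg.abs.aestronglyMeasurable]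
  exact ENNReal.ofReal_toReal_le

lemma aux_ofReal_abs_integral_le {μ : Measure E} {g : E → ℝ}
    (hg : Measurable g) :
    ENNReal.ofReal |∫ y, g y ∂μ| ≤ ∫⁻ y, ENNReal.ofReal |g y| ∂μ := by
  refine le_trans (ENNReal.ofReal_le_ofReal ?_) (aux_ofReal_integral_abs_le hg)
  calc |∫ y, g y ∂μ| = ‖∫ y, g y ∂μ‖ := (Real.norm_eq_abs _).symm
    _ ≤ ∫ y, ‖g y‖ ∂μ := norm_integral_le_integral_norm _
    _ = ∫ y, |g y| ∂μ := by simp [Real.norm_eq_abs]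

lemma aux_act_measurable (S : SubMarkovSemigroup E)
    (hJM : ∀ f : E → ℝ≥0∞, Measurable f →
      Measurable (fun p : ℝ≥0 × E => ∫⁻ y, f y ∂(S.P p.1 p.2)))
    (u : E → ℝ) (hu : Measurable u)
    (hint : ∀ (t : ℝ≥0) (x : E), Integrable u (S.P t x)) (t : ℝ≥0) :
    Measurable (S.act t u) := by
  have h1 : Measurable fun y => (∫⁻ z, ENNReal.ofReal (u z) ∂(S.P t y)) :=
    (hJM _ (ENNReal.measurable_ofReal.comp hu)).comp (measurable_const.prodMk measurable_id)
  have h2 : Measurable fun y => (∫⁻ z, ENNReal.ofReal (-u z) ∂(S.P t y)) :=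
    (hJM _ (ENNReal.measurable_ofReal.comp hu.neg)).comp (measurable_const.prodMk measurable_id)
  have : S.act t u = fun y => (∫⁻ z, ENNReal.ofReal (u z) ∂(S.P t y)).toReal
      - (∫⁻ z, ENNReal.ofReal (-u z) ∂(S.P t y)).toReal := by
    funext y
    exact integral_eq_lintegral_pos_part_sub_lintegral_neg_part (hint t y)
  rw [this]
  exact (ENNReal.measurable_toReal.comp h1).sub (ENNReal.measurable_toReal.comp h2)

end AuxLemmas

lemma aux_key_bound {E : Type*} [MeasurableSpace E] (S : SubMarkovSemigroup E)
    (hJM : ∀ f : E → ℝ≥0∞, Measurable f →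
      Measurable (fun p : ℝ≥0 × E => ∫⁻ y, f y ∂(S.P p.1 p.2)))
    (u : E → ℝ) (hu : Measurable u)
    (hint : ∀ (t : ℝ≥0) (x : E), Integrable u (S.P t x))
    (α : ℝ) (hα : 0 ≤ α) (c : E → ℝ≥0∞) (hc : Measurable c)
    (h3 : ∀ (t : ℝ≥0) (x : E),
      ENNReal.ofReal |S.act t u x - u x| ≤ (t : ℝ≥0∞) * c x)
    (x : E) (n : ℕ) :
    ENNReal.ofReal (S.Valpha α u (dyadicPartition n) x) ≤
      (1 + ENNReal.ofReal (α * Real.exp α)) *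
        ((((2 : ℝ≥0∞) ^ n)⁻¹ * ∑ k ∈ Finset.range (n * 2 ^ n),
            ENNReal.ofReal (Real.exp (-α * ((k : ℝ) / 2 ^ n))) *
              ∫⁻ y, (ENNReal.ofReal |u y| + c y) ∂(S.P ((k : ℝ≥0) / 2 ^ n) x))
          + ENNReal.ofReal (Real.exp (-α * ((n : ℝ≥0) : ℝ))) *
              ∫⁻ y, ENNReal.ofReal |u y| ∂(S.P ((n : ℝ≥0)) x)) := by
  classical
  set δ : ℝ≥0 := (2 ^ n : ℝ≥0)⁻¹ with hδ
  set t : ℕ → ℝ≥0 := fun k => (k : ℝ≥0) / 2 ^ n with ht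
  have h2n : (2 ^ n : ℝ≥0) ≠ 0 := by positivity
  have hδ1 : δ ≤ 1 := by
    rw [hδ]
    have h12 : (1:ℝ≥0) ≤ 2 ^ n := by exact_mod_cast Nat.one_le_two_pow
    exact inv_le_one_of_one_le₀ h12
  have hδR0 : (0:ℝ) ≤ (δ:ℝ) := δ.coe_nonneg
  have hδR1 : (δ:ℝ) ≤ 1 := by exact_mod_cast hδ1
  have htstep : ∀ k : ℕ, t (k + 1) = t k + δ := by
    intro k
    simp only [ht, hδ]
    rw [← one_div]
    push_cast
    rw [add_div]
  have htsub : ∀ k : ℕ, t (k + 1) - t k = δ := by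
    intro k
    rw [htstep k]
    exact add_tsub_cancel_left _ _
  have htN : t (n * 2 ^ n) = (n : ℝ≥0) := by
    simp only [ht]
    push_cast
    exact mul_div_cancel_right₀ _ h2n
  have htR : ∀ k : ℕ, ((t k : ℝ≥0) : ℝ) = (k : ℝ) / 2 ^ n := by
    intro k
    simp only [ht]
    push_cast
    ring
  have hδc : ((δ : ℝ≥0) : ℝ≥0∞) = ((2 : ℝ≥0∞) ^ n)⁻¹ := by
    rw [hδ, ENNReal.coe_inv (by positivity)]
    norm_cast
    rw [ENNReal.coe_inv (by positivity), ENNReal.coe_natCast]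
  have hau : ∀ s : ℝ≥0, Measurable (S.act s u) := aux_act_measurable S hJM u hu hint
  have huabs : Measurable fun z => ENNReal.ofReal |u z| :=
    ENNReal.measurable_ofReal.comp hu.abs
  have hWmeas : Measurable (fun y => ∫⁻ z, ENNReal.ofReal |u z| ∂(S.P δ y)) :=
    (hJM _ huabs).comp (measurable_const.prodMk measurable_id)
  set F : E → ℝ := fun y => |u y - Real.exp (-α * (δ:ℝ)) * S.act δ u y| with hF
  have hFmeas : Measurable F := (hu.sub ((hau δ).const_mul _)).abs
  set EE : ℕ → ℝ≥0∞ := fun k => ENNReal.ofReal (Real.exp (-α * (t k : ℝ))) with hEE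
  set G : ℕ → ℝ≥0∞ := fun k =>
    ∫⁻ y, (ENNReal.ofReal |u y| + c y) ∂(S.P (t k) x) with hG
  set W : ℕ → ℝ≥0∞ := fun k =>
    ∫⁻ y, ENNReal.ofReal |u y| ∂(S.P (t k) x) with hW
  set K' : ℝ≥0∞ := ENNReal.ofReal (α * Real.exp α) with hK
  set δc : ℝ≥0∞ := ((δ : ℝ≥0) : ℝ≥0∞) with hδcdef
  -- rewrite Valpha
  have hVeq : S.Valpha α u (dyadicPartition n) x
      = (∑ k ∈ Finset.range (n * 2 ^ n), Real.exp (-α * (t k : ℝ)) * S.act (t k) F x)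
        + Real.exp (-α * (t (n * 2 ^ n) : ℝ)) * S.act (t (n * 2 ^ n)) (fun y => |u y|) x := by
    simp only [SubMarkovSemigroup.Valpha, dyadicPartition]
    congr 1
    · rw [← Fin.sum_univ_eq_sum_range
        (fun k => Real.exp (-α * (t k : ℝ)) * S.act (t k) F x) (n * 2 ^ n)]
      refine Finset.sum_congr rfl fun i _ => ?_
      have e1 : ((i.castSucc : ℕ) : ℝ≥0) / 2 ^ n = t i.val := by
        simp [ht]
      have e2 : ((i.succ : ℕ) : ℝ≥0) / 2 ^ n = t (i.val + 1) := by
        simp [ht]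
      rw [e1, e2, htsub]
      have e3 : ((t (i.val + 1) : ℝ≥0) : ℝ) - ((t i.val : ℝ≥0) : ℝ) = (δ:ℝ) := by
        rw [htstep]
        push_cast
        ring
      rw [e3]
  -- per-term bound
  have hterm : ∀ k : ℕ,
      ENNReal.ofReal (Real.exp (-α * (t k : ℝ)) * S.act (t k) F x)
        ≤ δc * (EE k * G k) + K' * (δc * (EE (k+1) * W (k+1))) := by
    intro k
    rw [ENNReal.ofReal_mul (Real.exp_nonneg _)]
    have hact : ENNReal.ofReal (S.act (t k) F x)
        ≤ ∫⁻ y, ENNReal.ofReal (F y) ∂(S.P (t k) x) := by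
      rw [SubMarkovSemigroup.act, integral_eq_lintegral_of_nonneg_ae
        (Filter.Eventually.of_forall fun y => abs_nonneg _) hFmeas.aestronglyMeasurable]
      exact ENNReal.ofReal_toReal_le
    have hpt : ∀ y, ENNReal.ofReal (F y)
        ≤ δc * c y + ENNReal.ofReal (α * (δ:ℝ)) *
            ∫⁻ z, ENNReal.ofReal |u z| ∂(S.P δ y) := by
      intro y
      have he1 : Real.exp (-α * (δ:ℝ)) ≤ 1 := by
        rw [Real.exp_le_one_iff]
        nlinarith
      have habs : F y ≤ |S.act δ u y - u y|
          + (1 - Real.exp (-α * (δ:ℝ))) * |S.act δ u y| := by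
        have hrw : u y - Real.exp (-α * (δ:ℝ)) * S.act δ u y
            = -(S.act δ u y - u y) + (1 - Real.exp (-α * (δ:ℝ))) * S.act δ u y := by
          ring
        calc F y = |-(S.act δ u y - u y)
            + (1 - Real.exp (-α * (δ:ℝ))) * S.act δ u y| := by rw [hF]; simp only; rw [hrw]
          _ ≤ |-(S.act δ u y - u y)|
              + |(1 - Real.exp (-α * (δ:ℝ))) * S.act δ u y| := abs_add_le _ _
          _ = |S.act δ u y - u y|
              + (1 - Real.exp (-α * (δ:ℝ))) * |S.act δ u y| := by
            rw [abs_neg, abs_mul,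
              abs_of_nonneg (show (0:ℝ) ≤ 1 - Real.exp (-α * (δ:ℝ)) by linarith)]
      calc ENNReal.ofReal (F y)
          ≤ ENNReal.ofReal (|S.act δ u y - u y|
              + (1 - Real.exp (-α * (δ:ℝ))) * |S.act δ u y|) :=
            ENNReal.ofReal_le_ofReal habs
        _ ≤ ENNReal.ofReal |S.act δ u y - u y|
            + ENNReal.ofReal ((1 - Real.exp (-α * (δ:ℝ))) * |S.act δ u y|) :=
            ENNReal.ofReal_add_le
        _ ≤ δc * c y + ENNReal.ofReal (α * (δ:ℝ)) *
              ∫⁻ z, ENNReal.ofReal |u z| ∂(S.P δ y) := by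
            refine add_le_add (h3 δ y) ?_
            rw [ENNReal.ofReal_mul (by linarith)]
            refine mul_le_mul' (ENNReal.ofReal_le_ofReal ?_) ?_
            · have h5 := Real.add_one_le_exp (-(α * (δ:ℝ)))
              have h6 : -α * (δ:ℝ) = -(α * (δ:ℝ)) := by ring
              rw [h6]
              linarith
            · exact aux_ofReal_abs_integral_le hu
    have hint4 : ∫⁻ y, ENNReal.ofReal (F y) ∂(S.P (t k) x)
        ≤ δc * (∫⁻ y, c y ∂(S.P (t k) x))
          + ENNReal.ofReal (α * (δ:ℝ)) * W (k+1) := by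
      refine le_trans (lintegral_mono hpt) ?_
      rw [lintegral_add_left (hc.const_mul _),
        lintegral_const_mul _ hc, lintegral_const_mul _ hWmeas]
      have hsg : ∫⁻ y, ∫⁻ z, ENNReal.ofReal |u z| ∂(S.P δ y) ∂(S.P (t k) x)
          = W (k+1) := by
        rw [hW]
        simp only
        rw [htstep k, S.map_add (t k) δ _ huabs x]
      rw [hsg]
    refine le_trans (mul_le_mul_right (le_trans hact hint4) _) ?_
    rw [mul_add]
    refine add_le_add ?_ ?_
    · have hCG : ∫⁻ y, c y ∂(S.P (t k) x) ≤ G k :=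
        lintegral_mono fun y => le_add_self
      calc EE k * (δc * ∫⁻ y, c y ∂(S.P (t k) x))
          ≤ EE k * (δc * G k) := by gcongr
        _ = δc * (EE k * G k) := by ring
    · have hEk : EE k * ENNReal.ofReal (α * (δ:ℝ)) ≤ K' * δc * EE (k+1) := by
        rw [hEE]
        simp only
        rw [← ENNReal.ofReal_mul (Real.exp_nonneg _)]
        have h7 : Real.exp (α * (δ:ℝ)) * Real.exp (-(α * (δ:ℝ))) = 1 := by
          rw [← Real.exp_add]
          simp
        have hexp : Real.exp (-α * (t k : ℝ)) * (α * (δ:ℝ))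
            = (α * (δ:ℝ) * Real.exp (α * (δ:ℝ))) * Real.exp (-α * (t (k+1) : ℝ)) := by
          rw [htstep k]
          push_cast
          rw [show -α * ((t k : ℝ) + (δ:ℝ)) = -α * (t k : ℝ) + -(α * (δ:ℝ)) by ring,
            Real.exp_add]
          linear_combination (-(α * (δ:ℝ)) * Real.exp (-α * ((t k : ℝ≥0) : ℝ))) * h7
        rw [hexp, ENNReal.ofReal_mul (by positivity)]
        refine mul_le_mul' ?_ le_rfl
        rw [hK, hδcdef, ← ENNReal.ofReal_coe_nnreal, ← ENNReal.ofReal_mul (by positivity)]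
        apply ENNReal.ofReal_le_ofReal
        have hee : Real.exp (α * (δ:ℝ)) ≤ Real.exp α := by
          rw [Real.exp_le_exp]
          nlinarith
        linarith [mul_le_mul_of_nonneg_left hee (mul_nonneg hα hδR0)]
      calc EE k * (ENNReal.ofReal (α * (δ:ℝ)) * W (k+1))
          = (EE k * ENNReal.ofReal (α * (δ:ℝ))) * W (k+1) := by ring
        _ ≤ (K' * δc * EE (k+1)) * W (k+1) := mul_le_mul_left hEk _
        _ = K' * (δc * (EE (k+1) * W (k+1))) := by ring
  -- assemble
  have hWG : ∀ k : ℕ, W k ≤ G k := fun k => lintegral_mono fun y => le_self_add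
  have hsum : ENNReal.ofReal (S.Valpha α u (dyadicPartition n) x)
      ≤ (∑ k ∈ Finset.range (n * 2 ^ n),
          (δc * (EE k * G k) + K' * (δc * (EE (k+1) * W (k+1)))))
        + EE (n * 2 ^ n) * W (n * 2 ^ n) := by
    rw [hVeq]
    refine le_trans ENNReal.ofReal_add_le (add_le_add ?_ ?_)
    · refine le_trans (le_of_eq (ENNReal.ofReal_sum_of_nonneg fun k _ =>
        mul_nonneg (Real.exp_nonneg _) (integral_nonneg fun y => abs_nonneg _))) ?_
      exact Finset.sum_le_sum fun k _ => hterm k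
    · rw [ENNReal.ofReal_mul (Real.exp_nonneg _)]
      refine mul_le_mul' le_rfl ?_
      rw [SubMarkovSemigroup.act]
      exact aux_ofReal_integral_abs_le hu
  have hshift : ∑ k ∈ Finset.range (n * 2 ^ n), EE (k+1) * W (k+1)
      ≤ (∑ k ∈ Finset.range (n * 2 ^ n), EE k * W k)
        + EE (n * 2 ^ n) * W (n * 2 ^ n) := by
    calc ∑ k ∈ Finset.range (n * 2 ^ n), EE (k+1) * W (k+1)
        ≤ (∑ k ∈ Finset.range (n * 2 ^ n), EE (k+1) * W (k+1)) + EE 0 * W 0 :=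
          le_self_add
      _ = ∑ k ∈ Finset.range (n * 2 ^ n + 1), EE k * W k :=
          (Finset.sum_range_succ' (fun k => EE k * W k) (n * 2 ^ n)).symm
      _ = _ := Finset.sum_range_succ _ _
  have hδc1 : δc ≤ 1 := by
    rw [hδcdef]
    exact_mod_cast hδ1
  have hA : ENNReal.ofReal (S.Valpha α u (dyadicPartition n) x)
      ≤ (1 + K') * ((δc * ∑ k ∈ Finset.range (n * 2 ^ n), EE k * G k)
          + EE (n * 2 ^ n) * W (n * 2 ^ n)) := by
    refine le_trans hsum ?_
    rw [Finset.sum_add_distrib]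
    have e5 : ∑ k ∈ Finset.range (n * 2 ^ n), δc * (EE k * G k)
        = δc * ∑ k ∈ Finset.range (n * 2 ^ n), EE k * G k := by
      rw [Finset.mul_sum]
    have e6 : ∑ k ∈ Finset.range (n * 2 ^ n), K' * (δc * (EE (k+1) * W (k+1)))
        ≤ K' * ((δc * ∑ k ∈ Finset.range (n * 2 ^ n), EE k * G k)
            + EE (n * 2 ^ n) * W (n * 2 ^ n)) := by
      calc ∑ k ∈ Finset.range (n * 2 ^ n), K' * (δc * (EE (k+1) * W (k+1)))
          = K' * (δc * ∑ k ∈ Finset.range (n * 2 ^ n), EE (k+1) * W (k+1)) := by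
            rw [← Finset.mul_sum, ← Finset.mul_sum]
        _ ≤ K' * (δc * ((∑ k ∈ Finset.range (n * 2 ^ n), EE k * W k)
              + EE (n * 2 ^ n) * W (n * 2 ^ n))) := by
            gcongr
        _ = K' * (δc * (∑ k ∈ Finset.range (n * 2 ^ n), EE k * W k)
              + δc * (EE (n * 2 ^ n) * W (n * 2 ^ n))) := by
            rw [mul_add]
        _ ≤ K' * ((δc * ∑ k ∈ Finset.range (n * 2 ^ n), EE k * G k)
              + EE (n * 2 ^ n) * W (n * 2 ^ n)) := by
            refine mul_le_mul' le_rfl (add_le_add ?_ ?_)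
            · refine mul_le_mul' le_rfl (Finset.sum_le_sum fun k _ => ?_)
              exact mul_le_mul' le_rfl (hWG k)
            · calc δc * (EE (n * 2 ^ n) * W (n * 2 ^ n))
                  ≤ 1 * (EE (n * 2 ^ n) * W (n * 2 ^ n)) := mul_le_mul_left hδc1 _
                _ = _ := one_mul _
    rw [e5]
    calc (δc * ∑ k ∈ Finset.range (n * 2 ^ n), EE k * G k)
          + (∑ k ∈ Finset.range (n * 2 ^ n), K' * (δc * (EE (k+1) * W (k+1))))
          + EE (n * 2 ^ n) * W (n * 2 ^ n)
        ≤ (δc * ∑ k ∈ Finset.range (n * 2 ^ n), EE k * G k)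
          + (K' * ((δc * ∑ k ∈ Finset.range (n * 2 ^ n), EE k * G k)
              + EE (n * 2 ^ n) * W (n * 2 ^ n)))
          + EE (n * 2 ^ n) * W (n * 2 ^ n) :=
          add_le_add (add_le_add le_rfl e6) le_rfl
      _ = (1 + K') * ((δc * ∑ k ∈ Finset.range (n * 2 ^ n), EE k * G k)
          + EE (n * 2 ^ n) * W (n * 2 ^ n)) := by ring
  refine le_trans hA (le_of_eq ?_)
  have hconv : (δc * ∑ k ∈ Finset.range (n * 2 ^ n), EE k * G k)
      + EE (n * 2 ^ n) * W (n * 2 ^ n)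
      = (((2 : ℝ≥0∞) ^ n)⁻¹ * ∑ k ∈ Finset.range (n * 2 ^ n),
          ENNReal.ofReal (Real.exp (-α * ((k : ℝ) / 2 ^ n))) *
            ∫⁻ y, (ENNReal.ofReal |u y| + c y) ∂(S.P ((k : ℝ≥0) / 2 ^ n) x))
        + ENNReal.ofReal (Real.exp (-α * ((n : ℝ≥0) : ℝ))) *
            ∫⁻ y, ENNReal.ofReal |u y| ∂(S.P ((n : ℝ≥0)) x) := by
    congr 1
    · rw [hδc]
      refine congrArg _ (Finset.sum_congr rfl fun k _ => ?_)
      rw [hEE, hG]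
      simp only
      rw [htR k]
    · rw [hEE, hW]
      simp only
      rw [htN]
  rw [hconv]
/-- Under conditions (1) `U_α(|u|+c) < ∞`, (2) `limsup_{t→∞} e^{-αt}P_t|u| < ∞`,
(3) `|P_t u - u| ≤ t·c`, and (4) boundedness of the left-endpoint dyadic Riemann sums of
`t ↦ e^{-αt} P_t(|u|+c)(x)`, one has `sup_n V^α_{τ_n}(u)(x) < ∞` for every `x`, where
`τ_n = {k/2^n : 0 ≤ k ≤ n·2^n}`. -/
theorem statement9 {E : Type*} [MeasurableSpace E] (S : SubMarkovSemigroup E)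
    (hJM : ∀ f : E → ℝ≥0∞, Measurable f →
      Measurable (fun p : ℝ≥0 × E => ∫⁻ y, f y ∂(S.P p.1 p.2)))
    (u : E → ℝ) (hu : Measurable u)
    (hint : ∀ (t : ℝ≥0) (x : E), Integrable u (S.P t x))
    (α : ℝ) (hα : 0 ≤ α) (c : E → ℝ≥0∞) (hc : Measurable c)
    (h1 : ∀ x : E, S.resolvent α (fun y => ENNReal.ofReal |u y| + c y) x < ∞)
    (h2 : ∀ x : E, Filter.limsup (fun t : ℝ≥0 =>
        ENNReal.ofReal (Real.exp (-α * t)) * ∫⁻ y, ENNReal.ofReal |u y| ∂(S.P t x))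
      Filter.atTop < ∞)
    (h3 : ∀ (t : ℝ≥0) (x : E),
      ENNReal.ofReal |S.act t u x - u x| ≤ (t : ℝ≥0∞) * c x)
    (h4 : ∀ x : E, Filter.limsup (fun n : ℕ =>
        ((2 : ℝ≥0∞) ^ n)⁻¹ * ∑ k ∈ Finset.range (n * 2 ^ n),
          ENNReal.ofReal (Real.exp (-α * ((k : ℝ) / 2 ^ n))) *
            ∫⁻ y, (ENNReal.ofReal |u y| + c y) ∂(S.P ((k : ℝ≥0) / 2 ^ n) x))
      Filter.atTop < ∞) :
    ∀ x : E, (⨆ n : ℕ, ENNReal.ofReal (S.Valpha α u (dyadicPartition n) x)) < ∞ := by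
  intro x
  have hKne : (1 + ENNReal.ofReal (α * Real.exp α)) ≠ ⊤ :=
    ENNReal.add_ne_top.2 ⟨ENNReal.one_ne_top, ENNReal.ofReal_ne_top⟩
  have h4x := h4 x
  have h2x := h2 x
  have hevR := Filter.eventually_lt_of_limsup_lt
    (ENNReal.lt_add_right h4x.ne one_ne_zero)
  have hevF := Filter.eventually_lt_of_limsup_lt
    (ENNReal.lt_add_right h2x.ne one_ne_zero)
  have hevFn := tendsto_natCast_atTop_atTop (R := ℝ≥0) |>.eventually hevF
  have hev : ∀ᶠ n : ℕ in Filter.atTop,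
      ENNReal.ofReal (S.Valpha α u (dyadicPartition n) x) ≤
        (1 + ENNReal.ofReal (α * Real.exp α)) *
          ((Filter.limsup (fun n : ℕ =>
              ((2 : ℝ≥0∞) ^ n)⁻¹ * ∑ k ∈ Finset.range (n * 2 ^ n),
                ENNReal.ofReal (Real.exp (-α * ((k : ℝ) / 2 ^ n))) *
                  ∫⁻ y, (ENNReal.ofReal |u y| + c y) ∂(S.P ((k : ℝ≥0) / 2 ^ n) x))
              Filter.atTop + 1)
            + (Filter.limsup (fun t : ℝ≥0 =>
                ENNReal.ofReal (Real.exp (-α * t)) *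
                  ∫⁻ y, ENNReal.ofReal |u y| ∂(S.P t x)) Filter.atTop + 1)) := by
    filter_upwards [hevR, hevFn] with n hn1 hn2
    refine le_trans (aux_key_bound S hJM u hu hint α hα c hc h3 x n) ?_
    exact mul_le_mul' le_rfl (add_le_add hn1.le hn2.le)
  obtain ⟨N₀, hN₀⟩ := Filter.eventually_atTop.1 hev
  set M := (1 + ENNReal.ofReal (α * Real.exp α)) *
    ((Filter.limsup (fun n : ℕ =>
        ((2 : ℝ≥0∞) ^ n)⁻¹ * ∑ k ∈ Finset.range (n * 2 ^ n),
          ENNReal.ofReal (Real.exp (-α * ((k : ℝ) / 2 ^ n))) *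
            ∫⁻ y, (ENNReal.ofReal |u y| + c y) ∂(S.P ((k : ℝ≥0) / 2 ^ n) x))
        Filter.atTop + 1)
      + (Filter.limsup (fun t : ℝ≥0 =>
          ENNReal.ofReal (Real.exp (-α * t)) *
            ∫⁻ y, ENNReal.ofReal |u y| ∂(S.P t x)) Filter.atTop + 1)) with hM
  have hMne : M ≠ ⊤ := by
    rw [hM]
    exact ENNReal.mul_ne_top hKne (ENNReal.add_ne_top.2
      ⟨ENNReal.add_ne_top.2 ⟨h4x.ne, ENNReal.one_ne_top⟩,
       ENNReal.add_ne_top.2 ⟨h2x.ne, ENNReal.one_ne_top⟩⟩)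
  have hbd : ∀ n : ℕ, ENNReal.ofReal (S.Valpha α u (dyadicPartition n) x)
      ≤ max ((Finset.range N₀).sup fun m =>
          ENNReal.ofReal (S.Valpha α u (dyadicPartition m) x)) M := by
    intro n
    rcases lt_or_ge n N₀ with h | h
    · exact le_max_of_le_left (Finset.le_sup (f := fun m => ENNReal.ofReal (S.Valpha α u (dyadicPartition m) x)) (Finset.mem_range.2 h))
    · exact le_max_of_le_right (hN₀ n h)
  refine lt_of_le_of_lt (iSup_le hbd) (max_lt ?_ hMne.lt_top)
  exact (Finset.sup_lt_iff (show (⊥:ℝ≥0∞) < ⊤ by simp)).2 fun m _ => ENNReal.ofReal_lt_top
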